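/- arXiv:1705.06416 — 3 statements merged into one kernel-verified Lean document; each statement's English description precedes it below -/
import Mathlib

section
/- Let Γ be a finite simplicial graph and let L = A ⋆ K and L' = A' ⋆ K' be two distinct strip subgraphs of Γ (so A and A' are pairs of non-adjacent vertices and K, K' are nonempty cliques). Then A ≠ A'. In other words, a pair of non-adjacent vertices of Γ is the non-clique factor of at most one strip subgraph of Γ. -/
open Relation

variable {V : Type*}

/-- Relators of the right-angled Coxeter group of a simplicial graph. -/
def racgRels (G : SimpleGraph V) : Set (FreeGroup V) :=
  {r | (∃ v, r = FreeGroup.of v * FreeGroup.of v) ∨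
       (∃ v w, G.Adj v w ∧
          r = FreeGroup.of v * FreeGroup.of w * FreeGroup.of v * FreeGroup.of w)}

/-- The right-angled Coxeter group `W_Γ` of a simplicial graph `Γ`. -/
abbrev RACG (G : SimpleGraph V) := PresentedGroup (racgRels G)

/-- The generator of `W_Γ` corresponding to a vertex. -/
def racgGen (G : SimpleGraph V) (v : V) : RACG G := PresentedGroup.of v

/-- Word length with respect to the vertex generators. -/
noncomputable def wordLength (G : SimpleGraph V) (g : RACG G) : ℕ :=
  sInf {n | ∃ l : List V, l.length = n ∧ (l.map (racgGen G)).prod = g}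

/-- Word metric on `W_Γ`. -/
noncomputable def wdist (G : SimpleGraph V) (g h : RACG G) : ℕ :=
  wordLength G (g⁻¹ * h)

/-- The special subgroup `W_T` generated by a subset `T` of the vertices. -/
def specialSubgroup (G : SimpleGraph V) (T : Set V) : Subgroup (RACG G) :=
  Subgroup.closure (racgGen G '' T)

/-- The left coset `g W_T` as a subset of `W_Γ`. -/
def leftCosetOf (G : SimpleGraph V) (g : RACG G) (T : Set V) : Set (RACG G) :=
  (g * ·) '' (specialSubgroup G T : Set (RACG G))

/-- The `C`-neighborhood of a subset in the word metric. -/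
noncomputable def nbhd (G : SimpleGraph V) (C : ℕ) (A : Set (RACG G)) : Set (RACG G) :=
  {x | ∃ a ∈ A, wdist G x a ≤ C}

/-- A subset of `W_Γ` has infinite diameter. -/
def InfDiam (G : SimpleGraph V) (A : Set (RACG G)) : Prop :=
  ∀ D : ℕ, ∃ x ∈ A, ∃ y ∈ A, D ≤ wdist G x y

/-- Two subsets are `C`-Hausdorff close. -/
def HausCloseWith (G : SimpleGraph V) (C : ℕ) (A B : Set (RACG G)) : Prop :=
  A ⊆ nbhd G C B ∧ B ⊆ nbhd G C A

/-- Two subsets are Hausdorff close. -/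
def HausClose (G : SimpleGraph V) (A B : Set (RACG G)) : Prop :=
  ∃ C : ℕ, HausCloseWith G C A B

/-- A pair of distinct non-adjacent vertices. -/
def NonAdjPair (G : SimpleGraph V) (s t : V) : Prop := s ≠ t ∧ ¬ G.Adj s t

/-- A set of vertices containing a pair of non-adjacent vertices. -/
def HasNonAdjPair (G : SimpleGraph V) (A : Set V) : Prop :=
  ∃ s ∈ A, ∃ t ∈ A, NonAdjPair G s t

/-- `L` is the join `A ⋆ B` (on the level of vertex sets of induced subgraphs). -/
def JoinDecomp (G : SimpleGraph V) (L A B : Set V) : Prop :=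
  A ∪ B = L ∧ ∀ a ∈ A, ∀ b ∈ B, G.Adj a b

/-- `L` is a join of two induced subgraphs, each containing a pair of
non-adjacent vertices. -/
def IsWidePre (G : SimpleGraph V) (L : Set V) : Prop :=
  ∃ A B : Set V, JoinDecomp G L A B ∧ HasNonAdjPair G A ∧ HasNonAdjPair G B

/-- The wide subgraphs `Ω(Γ)`: maximal joins of two induced subgraphs each
containing a pair of non-adjacent vertices. -/
def IsWide (G : SimpleGraph V) (L : Set V) : Prop :=
  IsWidePre G L ∧ ∀ L', IsWidePre G L' → L ⊆ L' → L = L'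

/-- `L = A ⋆ K` with `A` a pair of non-adjacent vertices and `K` a nonempty clique. -/
def IsStripDecomp (G : SimpleGraph V) (L A K : Set V) : Prop :=
  (∃ s t, NonAdjPair G s t ∧ A = {s, t}) ∧ K.Nonempty ∧ G.IsClique K ∧
    A ∪ K = L ∧ ∀ a ∈ A, ∀ k ∈ K, G.Adj a k

def IsStripPre (G : SimpleGraph V) (L : Set V) : Prop :=
  ∃ A K : Set V, IsStripDecomp G L A K

/-- The strip subgraphs `Ψ(Γ)`: subgraphs of the form `A ⋆ K` as above that are
not properly contained in any wide subgraph nor in any other such subgraph. -/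
def IsStrip (G : SimpleGraph V) (L : Set V) : Prop :=
  IsStripPre G L ∧ (∀ L', IsWide G L' → L ⊆ L' → L = L') ∧
    (∀ L', IsStripPre G L' → L ⊆ L' → L = L')

/-- Two hyperedges of a hypergraph intersect in a pair of non-adjacent vertices. -/
def hypStep (G : SimpleGraph V) (E : Set (Set V)) (H H' : Set V) : Prop :=
  H ∈ E ∧ H' ∈ E ∧ ∃ s t, NonAdjPair G s t ∧ s ∈ H ∩ H' ∧ t ∈ H ∩ H'

/-- The hyperedge sets of the lambda hypergraphs `Λ_i(Γ)`. -/
def Lam (G : SimpleGraph V) : ℕ → Set (Set V)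
  | 0 => {L | IsWide G L ∨ IsStrip G L}
  | (i+1) =>
      {Z | ∃ H ∈ Lam G i,
        Z = ⋃₀ {H' | H' ∈ Lam G i ∧ ReflTransGen (hypStep G (Lam G i)) H H'}}

/-- A hyperedge `H` of `Λ_i(Γ)` is a member of the hyperedge of `Λ_{i+1}(Γ)`
formed as the union of its `≡_i`-equivalence class. -/
def memberOf (G : SimpleGraph V) (i : ℕ) (H Z : Set V) : Prop :=
  H ∈ Lam G i ∧
    Z = ⋃₀ {H' | H' ∈ Lam G i ∧ ReflTransGen (hypStep G (Lam G i)) H H'}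

/-- `Γ` has hypergraph index exactly `h ∈ ℕ`. -/
def HasHypIndex (G : SimpleGraph V) (h : ℕ) : Prop :=
  (∃ L, IsWide G L) ∧ (∃ H ∈ Lam G h, Set.univ ⊆ H) ∧
    ∀ h' < h, ¬ ∃ H ∈ Lam G h', Set.univ ⊆ H

/-- The hypergraph index of `Γ` as an element of `ℕ ∪ {∞}`. -/
noncomputable def hypIndex (G : SimpleGraph V) : ℕ∞ :=
  sInf {x : ℕ∞ | ∃ m : ℕ, x = (m : ℕ∞) ∧ (∃ L, IsWide G L) ∧
          ∃ H ∈ Lam G m, Set.univ ⊆ H}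

/-- The realization `R_i(Γ)`: cosets `g W_H` for `H` a hyperedge of `Λ_i(Γ)`
whose induced subgraph is not a strip subgraph. -/
def realization (G : SimpleGraph V) (i : ℕ) : Set (Set (RACG G)) :=
  {L | ∃ (g : RACG G) (H : Set V), H ∈ Lam G i ∧ ¬ IsStrip G H ∧
        L = leftCosetOf G g H}

/-- A coset `g W_H` (with `H ∈ Λ_i`) is a member of `g' W_{H'}` (with
`H' ∈ Λ_{i+1}`). -/
def cosetMemberOf (G : SimpleGraph V) (i : ℕ) (L L' : Set (RACG G)) : Prop :=
  ∃ (g g' : RACG G) (H H' : Set V),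
    memberOf G i H H' ∧ L = leftCosetOf G g H ∧ L' = leftCosetOf G g' H' ∧ L ⊆ L'

/-- The maximal size of a clique of `Γ`. -/
noncomputable def maxCliqueSize (G : SimpleGraph V) : ℕ :=
  sSup {n : ℕ | ∃ K : Set V, G.IsClique K ∧ K.ncard = n}

/-- A combinatorial path in the Cayley graph of `W_Γ`. -/
def IsEdgePath (G : SimpleGraph V) (p : ℕ → RACG G) (n : ℕ) : Prop :=
  ∀ k < n, wdist G (p k) (p (k+1)) ≤ 1

/-- `Y` is `C`-path connected: any two points of `Y` are joined by a path in the
Cayley graph staying in the `C`-neighborhood of `Y`. -/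
def CPathConn (G : SimpleGraph V) (C : ℕ) (Y : Set (RACG G)) : Prop :=
  ∀ y₁ ∈ Y, ∀ y₂ ∈ Y, ∃ (n : ℕ) (p : ℕ → RACG G),
    p 0 = y₁ ∧ p n = y₂ ∧ IsEdgePath G p n ∧ ∀ k ≤ n, p k ∈ nbhd G C Y

/-- The coarse intersection degree of a collection `M` of subsets of `W_Γ` is at
most `d`. -/
def CoarseIntDegLE (G : SimpleGraph V) (M : Set (Set (RACG G))) (d : ℕ) : Prop :=
  ∃ (Ms : ℕ → Set (Set (RACG G))) (P : ℕ → Set (RACG G) → Set (Set (RACG G)))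
    (C : ℕ), 0 < C ∧ Ms 0 = M ∧
    (∀ i, 1 ≤ i → i ≤ d → ∀ A ∈ Ms i,
      (P i A ⊆ Ms (i-1)) ∧
      (A ⊆ ⋃ B ∈ P i A, nbhd G C B) ∧
      ((⋃ B ∈ P i A, B) ⊆ A) ∧
      (∀ A₁ ∈ P i A, ∀ A₂ ∈ P i A, ∃ (n : ℕ) (ch : ℕ → Set (RACG G)),
        ch 0 = A₁ ∧ ch n = A₂ ∧ (∀ k ≤ n, ch k ∈ P i A) ∧
        (∀ k < n, InfDiam G (nbhd G C (ch k) ∩ ch (k+1)) ∧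
          CPathConn G C (nbhd G C (ch k) ∩ ch (k+1))))) ∧
    (∃ A ∈ Ms d, ∀ B ∈ M, B ⊆ nbhd G C A)

/-- The coarse intersection degree of `M` is exactly `d`. -/
def CoarseIntDeg (G : SimpleGraph V) (M : Set (Set (RACG G))) (d : ℕ) : Prop :=
  CoarseIntDegLE G M d ∧ ∀ d' < d, ¬ CoarseIntDegLE G M d'

/-- A `(K, C)`-quasi-isometry between two right-angled Coxeter groups with
their word metrics. -/
def IsQI {V' : Type*} (G : SimpleGraph V) (G' : SimpleGraph V') (K C : ℝ)
    (f : RACG G → RACG G') : Prop :=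
  (∀ a b : RACG G,
      (1/K) * (wdist G a b : ℝ) - C ≤ (wdist G' (f a) (f b) : ℝ) ∧
      (wdist G' (f a) (f b) : ℝ) ≤ K * (wdist G a b : ℝ) + C) ∧
  (∀ y : RACG G', ∃ x : RACG G, (wdist G' y (f x) : ℝ) ≤ C)

/-- `Q` is the vertex set of an induced `4`-cycle of `Γ`. -/
def IsInducedSquare (G : SimpleGraph V) (Q : Set V) : Prop :=
  ∃ a b c d : V, Q = {a, b, c, d} ∧
    G.Adj a b ∧ G.Adj b c ∧ G.Adj c d ∧ G.Adj d a ∧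
    a ≠ c ∧ b ≠ d ∧ ¬ G.Adj a c ∧ ¬ G.Adj b d

/-- Adjacency in the square graph of `Γ`. -/
def sqAdj (G : SimpleGraph V) (Q Q' : Set V) : Prop :=
  IsInducedSquare G Q ∧ IsInducedSquare G Q' ∧ Q ≠ Q' ∧
    ∃ s t, NonAdjPair G s t ∧ s ∈ Q ∩ Q' ∧ t ∈ Q ∩ Q'

/-- `Γ` is a CFS graph. -/
def IsCFS (G : SimpleGraph V) : Prop :=
  ∃ Om K : Set V, Om ∪ K = Set.univ ∧ G.IsClique K ∧
    (∀ o ∈ Om, ∀ k ∈ K, G.Adj o k) ∧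
    ∃ Q₀, IsInducedSquare G Q₀ ∧
      ⋃₀ {Q | IsInducedSquare G Q ∧ ReflTransGen (sqAdj G) Q₀ Q} = Om

/-- Rank `n` pairs of non-adjacent vertices. -/
def IsRankPair (G : SimpleGraph V) : ℕ → V → V → Prop
  | 0, _, _ => False
  | 1, s, t => NonAdjPair G s t ∧ ¬ ∃ Q, IsInducedSquare G Q ∧ s ∈ Q ∧ t ∈ Q
  | (n+2), s, t => NonAdjPair G s t ∧
      ((∀ s₁ ∈ G.neighborSet s, ∀ s₂ ∈ G.neighborSet s,
          NonAdjPair G s₁ s₂ → IsRankPair G (n+1) s₁ s₂) ∨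
       (∀ t₁ ∈ G.neighborSet t, ∀ t₂ ∈ G.neighborSet t,
          NonAdjPair G t₁ t₂ → IsRankPair G (n+1) t₁ t₂))

/-- The hypergraph index spectrum of `W_Γ`. -/
noncomputable def hypSpectrum (G : SimpleGraph V) : Set ℕ∞ :=
  {x | ∃ T : Set V,
        (hypIndex (G.induce T) ≠ ⊤ ∧
          ∀ T' : Set V, hypIndex (G.induce T') ≠ ⊤ → T ⊆ T' → T = T') ∧
        hypIndex (G.induce T) = x}

/-- distinct strip subgraphs `L = A ⋆ K` and `L' = A' ⋆ K'` have
distinct non-clique factors: `A ≠ A'`. -/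
theorem strip_pairs_distinct [Finite V] (G : SimpleGraph V)
    (L L' A K A' K' : Set V)
    (hL : IsStrip G L) (hL' : IsStrip G L') (hne : L ≠ L')
    (hd : IsStripDecomp G L A K) (hd' : IsStripDecomp G L' A' K') :
    A ≠ A' := by
  intro hAA'
  subst hAA'
  obtain ⟨⟨s, t, hst, hA⟩, hKne, hKcl, hLK, hadj⟩ := hd
  obtain ⟨hA', hK'ne, hK'cl, hLK', hadj'⟩ := hd'
  have hAL : A ⊆ L := hLK ▸ Set.subset_union_left
  by_cases hsub : K' ⊆ L
  · -- then L' ⊆ L, contradicting maximality of L' among strip-pres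
    have hL'L : L' ⊆ L := by
      rw [← hLK']
      exact Set.union_subset hAL hsub
    exact hne ((hL'.2.2 L ⟨A, K, ⟨s, t, hst, hA⟩, hKne, hKcl, hLK, hadj⟩ hL'L).symm)
  · obtain ⟨k', hk'K', hk'L⟩ := Set.not_subset.mp hsub
    have hadjk' : ∀ a ∈ A, G.Adj a k' := fun a ha => hadj' a ha k' hk'K'
    by_cases hcl : ∀ k ∈ K, G.Adj k' k
    · -- K ∪ {k'} is a clique, so insert k' L is strip-pre, contradicting maximality
      have hstrip : IsStripPre G (insert k' L) := by
        refine ⟨A, insert k' K, ⟨s, t, hst, hA⟩, ⟨k', Set.mem_insert _ _⟩,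
          hKcl.insert (fun b hb _ => hcl b hb), ?_, ?_⟩
        · rw [← hLK, Set.union_insert]
        · rintro a ha k (rfl | hk)
          · exact hadjk' a ha
          · exact hadj a ha k hk
      have := hL.2.2 _ hstrip (Set.subset_insert _ _)
      exact hk'L (this ▸ Set.mem_insert _ _)
    · push_neg at hcl
      obtain ⟨k, hkK, hkadj⟩ := hcl
      have hkL : k ∈ L := hLK ▸ Set.mem_union_right _ hkK
      -- insert k' L is wide-pre
      have hwide : IsWidePre G (insert k' L) := by
        refine ⟨A, insert k' K, ⟨?_, ?_⟩, ⟨s, hA ▸ Set.mem_insert _ _, t, hA ▸ Set.mem_insert_of_mem _ rfl, hst⟩, ⟨k', Set.mem_insert _ _, k, Set.mem_insert_of_mem _ hkK, fun h => hk'L (h ▸ hkL), hkadj⟩⟩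
        · rw [← hLK, Set.union_insert]
        · rintro a ha b (rfl | hb)
          · exact hadjk' a ha
          · exact hadj a ha b hb
      -- extend to a maximal wide set
      set S : Set (Set V) := {X | IsWidePre G X ∧ insert k' L ⊆ X} with hS
      have hfin : S.Finite := Set.toFinite _
      have hSne : S.Nonempty := ⟨insert k' L, hwide, subset_rfl⟩
      obtain ⟨M, hMS, hMmax⟩ := Set.Finite.exists_maximalFor id S hfin hSne
      have hMwide : IsWide G M :=
        ⟨hMS.1, fun L₂ hL₂ hsub₂ => hsub₂.antisymm (hMmax ⟨hL₂, hMS.2.trans hsub₂⟩ hsub₂)⟩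
      have hLM : L ⊆ M := (Set.subset_insert _ _).trans hMS.2
      have := hL.2.1 M hMwide hLM
      exact hk'L (this ▸ hMS.2 (Set.mem_insert _ _))
end

section
/- Let Γ be a finite simplicial graph, let u and v be distinct non-adjacent vertices of Γ, and let H ⊆ V(Γ) be a subset with v ∉ H. Then for every positive integer n and for all x ∈ W_H and y ∈ (uv)ⁿW_H, the word-metric distance satisfies d(x,y) ≥ n; that is, the cosets W_H and (uv)ⁿW_H are at distance at least n apart in W_Γ. -/
open Relation

variable {V : Type*}

-- Auxiliary

def reflA : Equiv.Perm ℤ := ⟨fun p => -p, fun p => -p, fun p => by ring, fun p => by ring⟩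
def reflB : Equiv.Perm ℤ := ⟨fun p => 2 - p, fun p => 2 - p, fun p => by ring, fun p => by ring⟩

@[simp] lemma reflA_apply (p : ℤ) : reflA p = -p := rfl
@[simp] lemma reflB_apply (p : ℤ) : reflB p = 2 - p := rfl

open Classical in
noncomputable def genPerm (u v s : V) : Equiv.Perm ℤ :=
  if s = u then reflA else if s = v then reflB else 1

lemma genPerm_sq (u v s : V) : genPerm u v s * genPerm u v s = 1 := by
  unfold genPerm
  split_ifs <;> ext p <;> simp [reflA, reflB, Equiv.Perm.mul_apply]

lemma genPerm_abs_le (u v s : V) (p : ℤ) : |genPerm u v s p| ≤ |p| + 2 := by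
  unfold genPerm
  have h2 : |2 - p| ≤ |p| + 2 := by
    have := abs_sub (2:ℤ) p
    simp at this ⊢; omega
  split_ifs <;> simp <;> omega

lemma genPerm_abs_eq (u v s : V) (hs : s ≠ v) (p : ℤ) : |genPerm u v s p| = |p| := by
  by_cases h1 : s = u <;> simp [genPerm, h1, hs]

lemma racg_rels_check (G : SimpleGraph V) (u v : V) (hadj : ¬ G.Adj u v) :
    ∀ r ∈ racgRels G, FreeGroup.lift (genPerm u v) r = 1 := by
  rintro r (⟨s, rfl⟩ | ⟨s, t, hst, rfl⟩)
  · simp [genPerm_sq]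
  · have hone : genPerm u v s = 1 ∨ genPerm u v t = 1 := by
      by_cases hs : s = u
      · right
        have ht1 : t ≠ u := fun h => hst.ne (hs.trans h.symm)
        have ht2 : t ≠ v := fun h => hadj (hs ▸ h ▸ hst)
        simp [genPerm, ht1, ht2]
      · by_cases hs' : s = v
        · right
          have ht1 : t ≠ u := fun h => hadj (G.adj_symm (hs' ▸ h ▸ hst))
          have ht2 : t ≠ v := fun h => hst.ne (hs'.trans h.symm)
          simp [genPerm, ht1, ht2]
        · left; simp [genPerm, hs, hs']
    simp only [map_mul, FreeGroup.lift_apply_of]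
    rcases hone with h | h <;> simp only [h, one_mul, mul_one]
    · exact genPerm_sq u v t
    · exact genPerm_sq u v s

noncomputable def racgPhi (G : SimpleGraph V) (u v : V) (hadj : ¬ G.Adj u v) :
    RACG G →* Equiv.Perm ℤ :=
  PresentedGroup.toGroup (racg_rels_check G u v hadj)

lemma racgPhi_gen (G : SimpleGraph V) (u v : V) (hadj : ¬ G.Adj u v) (s : V) :
    racgPhi G u v hadj (racgGen G s) = genPerm u v s :=
  PresentedGroup.toGroup.of _

lemma racgGen_sq (G : SimpleGraph V) (s : V) : racgGen G s * racgGen G s = 1 := by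
  have : PresentedGroup.mk (racgRels G) (FreeGroup.of s * FreeGroup.of s) = 1 :=
    (QuotientGroup.eq_one_iff _).2
      (Subgroup.subset_normalClosure (Or.inl ⟨s, rfl⟩))
  simpa [racgGen, PresentedGroup.of, map_mul] using this

lemma exists_word (G : SimpleGraph V) (g : RACG G) :
    ∃ l : List V, (l.map (racgGen G)).prod = g := by
  obtain ⟨w, rfl⟩ := PresentedGroup.mk_surjective (racgRels G) g
  induction w using FreeGroup.induction_on with
  | C1 => exact ⟨[], by simp⟩
  | of s =>
    exact ⟨[s], by
      simp only [List.map_cons, List.map_nil, List.prod_cons, List.prod_nil, mul_one]; rfl⟩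
  | inv_of s _ =>
    refine ⟨[s], ?_⟩
    simp only [List.map_cons, List.map_nil, List.prod_cons, List.prod_nil, mul_one, map_inv]
    exact eq_inv_of_mul_eq_one_left (racgGen_sq G s)
  | mul a b ha hb =>
    obtain ⟨la, hla⟩ := ha
    obtain ⟨lb, hlb⟩ := hb
    exact ⟨la ++ lb, by simp [hla, hlb]⟩

lemma prod_abs_le (u v : V) (l : List V) (p : ℤ) :
    |((l.map (genPerm u v)).prod) p| ≤ |p| + 2 * l.length := by
  induction l generalizing p with
  | nil => simp
  | cons a l ih =>
    simp only [List.map_cons, List.prod_cons, Equiv.Perm.mul_apply, List.length_cons]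
    calc |genPerm u v a (((l.map (genPerm u v)).prod) p)|
        ≤ |((l.map (genPerm u v)).prod) p| + 2 := genPerm_abs_le u v a _
      _ ≤ |p| + 2 * l.length + 2 := by linarith [ih p]
      _ = |p| + 2 * (l.length + 1) := by push_cast; ring

lemma special_abs (G : SimpleGraph V) (u v : V) (hadj : ¬ G.Adj u v) (H : Set V)
    (hv : v ∉ H) {g : RACG G} (hg : g ∈ specialSubgroup G H) (p : ℤ) :
    |racgPhi G u v hadj g p| = |p| := by
  revert p
  refine Subgroup.closure_induction
    (p := fun g _ => ∀ p : ℤ, |racgPhi G u v hadj g p| = |p|) ?_ ?_ ?_ ?_ hg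
  · rintro _ ⟨s, hs, rfl⟩ p
    rw [racgPhi_gen]
    exact genPerm_abs_eq u v s (fun h => hv (h ▸ hs)) p
  · intro p; simp
  · intro a b _ _ ha hb p
    rw [map_mul, Equiv.Perm.mul_apply, ha, hb]
  · intro a _ ha p
    have h := ha ((racgPhi G u v hadj a)⁻¹ p)
    rw [show (racgPhi G u v hadj a) ((racgPhi G u v hadj a)⁻¹ p) = p from Equiv.apply_symm_apply _ p] at h
    rw [map_inv]
    exact h.symm

lemma transl_pow (n : ℕ) (p : ℤ) : ((reflA * reflB) ^ n) p = p - 2 * n := by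
  induction n generalizing p with
  | zero => simp
  | succ n ih =>
    rw [pow_succ', Equiv.Perm.mul_apply]
    simp only [Equiv.Perm.mul_apply, reflB_apply, reflA_apply]
    rw [ih]
    push_cast; ring


/-- for distinct non-adjacent vertices `u, v` and `H ⊆ V(Γ)` with
`v ∉ H`, the cosets `W_H` and `(uv)ⁿ W_H` are at distance at least `n`. -/
theorem coset_distance_lower_bound [Finite V] (G : SimpleGraph V) (u v : V)
    (huv : u ≠ v) (hadj : ¬ G.Adj u v) (H : Set V) (hv : v ∉ H)
    (n : ℕ) (hn : 0 < n) (x y : RACG G)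
    (hx : x ∈ specialSubgroup G H)
    (hy : y ∈ leftCosetOf G ((racgGen G u * racgGen G v) ^ n) H) :
    n ≤ wdist G x y := by
  classical
  obtain ⟨a, ha, rfl⟩ := hy
  set φ := racgPhi G u v hadj with hφ
  have hgu : genPerm u v u = reflA := if_pos rfl
  have hgv : genPerm u v v = reflB := by
    simp [genPerm, huv.symm]
  have ha0 : φ a 0 = 0 := by
    have := special_abs G u v hadj H hv ha 0
    simpa using this
  have hval : |φ (x⁻¹ * ((racgGen G u * racgGen G v) ^ n * a)) 0| = 2 * n := by
    rw [map_mul, map_mul, map_pow, map_mul, map_inv, hφ, racgPhi_gen, racgPhi_gen, hgu, hgv]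
    rw [Equiv.Perm.mul_apply, Equiv.Perm.mul_apply, ha0, transl_pow]
    have := special_abs G u v hadj H hv (inv_mem hx) (0 - 2 * n)
    rw [map_inv] at this
    rw [this]
    simp [abs_of_nonneg]
  refine le_csInf ?_ ?_
  · obtain ⟨l, hl⟩ := exists_word G (x⁻¹ * ((racgGen G u * racgGen G v) ^ n * a))
    exact ⟨l.length, l, rfl, hl⟩
  · rintro b ⟨l, rfl, hl⟩
    have hmap : φ ((l.map (racgGen G)).prod) = (l.map (genPerm u v)).prod := by
      rw [map_list_prod, List.map_map]
      congr 1
    have hb := prod_abs_le u v l (0 : ℤ)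
    rw [← hmap, hl, hval] at hb
    simp only [abs_zero, zero_add] at hb
    omega
end

section
/- Let Γ be a finite simplicial graph. Then Γ has hypergraph index 1 if and only if Γ is a CFS graph and Γ is not a join A ⋆ B with A and B each containing a pair of non-adjacent vertices. -/
open Relation

variable {V : Type*}

section Aux
variable {V : Type*} {G : SimpleGraph V}

lemma nonAdjPair_symm {s t : V} (h : NonAdjPair G s t) : NonAdjPair G t s :=
  ⟨h.1.symm, fun ha => h.2 ha.symm⟩

lemma joinDecomp_not_mem_both {L A B : Set V} (h : JoinDecomp G L A B) {v : V}
    (hA : v ∈ A) (hB : v ∈ B) : False := G.irrefl (h.2 v hA v hB)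

lemma pair_same_side {L A B : Set V} (h : JoinDecomp G L A B) {s t : V}
    (hp : NonAdjPair G s t) (hs : s ∈ L) (ht : t ∈ L) :
    (s ∈ A ∧ t ∈ A) ∨ (s ∈ B ∧ t ∈ B) := by
  rw [← h.1] at hs ht
  rcases hs with hs | hs <;> rcases ht with ht | ht
  · exact Or.inl ⟨hs, ht⟩
  · exact absurd (h.2 s hs t ht) hp.2
  · exact absurd (h.2 t ht s hs).symm hp.2
  · exact Or.inr ⟨hs, ht⟩

lemma strip_pair_mem {L A K : Set V} (h : IsStripDecomp G L A K) {s t : V}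
    (hp : NonAdjPair G s t) (hs : s ∈ L) (ht : t ∈ L) : s ∈ A ∧ t ∈ A := by
  obtain ⟨-, -, hKcl, hU, hJ⟩ := h
  rw [← hU] at hs ht
  rcases hs with hs | hs <;> rcases ht with ht | ht
  · exact ⟨hs, ht⟩
  · exact absurd (hJ s hs t ht) hp.2
  · exact absurd (hJ t ht s hs).symm hp.2
  · exact absurd (hKcl hs ht hp.1) hp.2

lemma mem_pair_cases {s t p q x : V} (hp : p = s ∨ p = t) (hq : q = s ∨ q = t)
    (hpq : p ≠ q) (hx : x = s ∨ x = t) : x = p ∨ x = q := by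
  rcases hp with rfl | rfl <;> rcases hq with rfl | rfl <;> rcases hx with rfl | rfl <;> tauto

/-- Any element of the pair part of a strip is one of two given nonadjacent
vertices of the strip. -/
lemma strip_pair_eq {L A K : Set V} (h : IsStripDecomp G L A K) {s t : V}
    (hp : NonAdjPair G s t) (hs : s ∈ L) (ht : t ∈ L) :
    ∀ x ∈ A, x = s ∨ x = t := by
  obtain ⟨hsA, htA⟩ := strip_pair_mem h hp hs ht
  obtain ⟨⟨s₀, t₀, _, rfl⟩, -⟩ := h
  intro x hx
  exact mem_pair_cases hsA htA hp.1 hx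

lemma widePre_not_subset_stripPre {L L' : Set V} (hW : IsWidePre G L)
    (hS : IsStripPre G L') (hsub : L ⊆ L') : False := by
  obtain ⟨A, B, jd, ⟨a, haA, a', ha'A, hpa⟩, ⟨b, hbB, b', hb'B, hpb⟩⟩ := hW
  obtain ⟨A', K', hd⟩ := hS
  have haL : a ∈ L := jd.1 ▸ (Or.inl haA)
  have ha'L : a' ∈ L := jd.1 ▸ (Or.inl ha'A)
  have hbL : b ∈ L := jd.1 ▸ (Or.inr hbB)
  have hb'L : b' ∈ L := jd.1 ▸ (Or.inr hb'B)
  obtain ⟨haA', ha'A'⟩ := strip_pair_mem hd hpa (hsub haL) (hsub ha'L)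
  obtain ⟨hbA', -⟩ := strip_pair_mem hd hpb (hsub hbL) (hsub hb'L)
  have hab : G.Adj a b := jd.2 a haA b hbB
  rcases strip_pair_eq hd hpa (hsub haL) (hsub ha'L) b hbA' with rfl | rfl
  · exact G.irrefl hab
  · exact hpa.2 hab

/-- Existence of a maximal wide-or-strip-pre subgraph containing a given one. -/
lemma exists_maximal_pre [Finite V] {L : Set V}
    (h : IsWidePre G L ∨ IsStripPre G L) :
    ∃ M, L ⊆ M ∧ (IsWidePre G M ∨ IsStripPre G M) ∧
      ∀ M', (IsWidePre G M' ∨ IsStripPre G M') → M ⊆ M' → M = M' := by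
  classical
  set S : Set (Set V) := {M | (IsWidePre G M ∨ IsStripPre G M) ∧ L ⊆ M} with hS
  obtain ⟨M, hM, hmax⟩ := Set.Finite.exists_maximalFor id S (Set.toFinite S)
    ⟨L, h, subset_rfl⟩
  exact ⟨M, hM.2, hM.1, fun M' hM' hsub =>
    Set.Subset.antisymm hsub (hmax ⟨hM', hM.2.trans hsub⟩ hsub)⟩

lemma exists_isWide_superset [Finite V] {L : Set V} (h : IsWidePre G L) :
    ∃ M, L ⊆ M ∧ IsWide G M := by
  obtain ⟨M, hsub, hM, hmax⟩ := exists_maximal_pre (Or.inl h)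
  rcases hM with hM | hM
  · exact ⟨M, hsub, hM, fun L' hL' h' => hmax L' (Or.inl hL') h'⟩
  · exact absurd (widePre_not_subset_stripPre h hM hsub) (fun f => f)

lemma exists_lam0_superset [Finite V] {L : Set V}
    (h : IsWidePre G L ∨ IsStripPre G L) :
    ∃ M, L ⊆ M ∧ M ∈ Lam G 0 := by
  obtain ⟨M, hsub, hM, hmax⟩ := exists_maximal_pre h
  rcases hM with hM | hM
  · exact ⟨M, hsub, Or.inl ⟨hM, fun L' hL' h' => hmax L' (Or.inl hL') h'⟩⟩
  · refine ⟨M, hsub, Or.inr ⟨hM, fun L' hL' h' => hmax L' (Or.inl hL'.1) h',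
      fun L' hL' h' => hmax L' (Or.inr hL') h'⟩⟩

end Aux
section Aux2
variable {V : Type*} {G : SimpleGraph V}

/-- A strip cannot admit an external nonadjacent pair joined to its pair part. -/
lemma strip_no_external_pair [Finite V] {S A K : Set V} (hS : IsStrip G S)
    (hd : IsStripDecomp G S A K) {b b' : V} (hbb : NonAdjPair G b b')
    (hb : ∀ a ∈ A, G.Adj a b) (hb' : ∀ a ∈ A, G.Adj a b') : False := by
  obtain ⟨⟨s, t, hst, hA⟩, hKne, hKcl, hU, hJ⟩ := hd
  have hWpre : IsWidePre G (A ∪ (K ∪ {b, b'})) := by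
    refine ⟨A, K ∪ {b, b'}, ⟨rfl, ?_⟩, ⟨s, ?_, t, ?_, hst⟩,
      ⟨b, ?_, b', ?_, hbb⟩⟩
    · intro a ha y hy
      rcases hy with hy | hy
      · exact hJ a ha y hy
      · rcases hy with rfl | rfl
        · exact hb a ha
        · exact hb' a ha
    · rw [hA]; exact Or.inl rfl
    · rw [hA]; exact Or.inr rfl
    · exact Or.inr (Or.inl rfl)
    · exact Or.inr (Or.inr rfl)
  obtain ⟨M, hsub, hM⟩ := exists_isWide_superset hWpre
  have hSM : S ⊆ M := by
    rw [← hU]; exact (Set.union_subset_union_right A Set.subset_union_left).trans hsub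
  have hSeq : S = M := hS.2.1 M hM hSM
  have hbS : b ∈ S := hSeq ▸ hsub (Or.inr (Or.inr (Or.inl rfl)))
  have hb'S : b' ∈ S := hSeq ▸ hsub (Or.inr (Or.inr (Or.inr rfl)))
  rw [← hU] at hbS hb'S
  have pairmem : ∀ x, x ∈ A → x = s ∨ x = t := by
    intro x hx; rw [hA] at hx; exact hx
  rcases hbS with hbA | hbK
  · rcases pairmem b hbA with rfl | rfl
    · exact G.irrefl (hb b hbA)
    · exact hst.2 (hb s (by rw [hA]; exact Or.inl rfl))
  · rcases hb'S with hb'A | hb'K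
    · rcases pairmem b' hb'A with rfl | rfl
      · exact G.irrefl (hb' b' hb'A)
      · exact hst.2 (hb' s (by rw [hA]; exact Or.inl rfl))
    · exact hbb.2 (hKcl hbK hb'K hbb.1)

/-- A strip and a wide subgraph cannot share a nonadjacent pair. -/
lemma strip_wide_no_shared_pair [Finite V] {S L : Set V} (hS : IsStrip G S)
    (hL : IsWide G L) {p q : V} (hpq : NonAdjPair G p q)
    (hpS : p ∈ S) (hqS : q ∈ S) (hpL : p ∈ L) (hqL : q ∈ L) : False := by
  obtain ⟨A, K, hd⟩ := hS.1
  obtain ⟨AL, BL, jd, ⟨a, haA, a', ha'A, hpa⟩, ⟨b, hbB, b', hb'B, hpb⟩⟩ := hL.1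
  have hAcases := strip_pair_eq hd hpq hpS hqS
  rcases pair_same_side jd hpq hpL hqL with ⟨hpA, hqA⟩ | ⟨hpB, hqB⟩
  · refine strip_no_external_pair hS hd hpb ?_ ?_
    · intro x hx
      rcases hAcases x hx with rfl | rfl
      · exact jd.2 x hpA b hbB
      · exact jd.2 x hqA b hbB
    · intro x hx
      rcases hAcases x hx with rfl | rfl
      · exact jd.2 x hpA b' hb'B
      · exact jd.2 x hqA b' hb'B
  · refine strip_no_external_pair hS hd hpa ?_ ?_
    · intro x hx
      rcases hAcases x hx with rfl | rfl
      · exact (jd.2 a haA x hpB).symm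
      · exact (jd.2 a haA x hqB).symm
    · intro x hx
      rcases hAcases x hx with rfl | rfl
      · exact (jd.2 a' ha'A x hpB).symm
      · exact (jd.2 a' ha'A x hqB).symm

/-- Two strips sharing a nonadjacent pair are equal. -/
lemma strip_eq_of_shared_pair [Finite V] {S S' : Set V} (hS : IsStrip G S)
    (hS' : IsStrip G S') {p q : V} (hpq : NonAdjPair G p q)
    (hpS : p ∈ S) (hqS : q ∈ S) (hpS' : p ∈ S') (hqS' : q ∈ S') : S = S' := by
  obtain ⟨A, K, hd⟩ := hS.1
  obtain ⟨A', K', hd'⟩ := hS'.1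
  have hAc := strip_pair_eq hd hpq hpS hqS
  have hA'c := strip_pair_eq hd' hpq hpS' hqS'
  obtain ⟨hpA, hqA⟩ := strip_pair_mem hd hpq hpS hqS
  obtain ⟨hpA', hqA'⟩ := strip_pair_mem hd' hpq hpS' hqS'
  -- every element of K' is adjacent to every element of A, and vice versa
  have hK'A : ∀ k ∈ K', ∀ a ∈ A, G.Adj a k := by
    intro k hk a ha
    rcases hAc a ha with rfl | rfl
    · exact hd'.2.2.2.2 a hpA' k hk
    · exact hd'.2.2.2.2 a hqA' k hk
  have hKA' : ∀ k ∈ K, ∀ a ∈ A', G.Adj a k := by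
    intro k hk a ha
    rcases hA'c a ha with rfl | rfl
    · exact hd.2.2.2.2 a hpA k hk
    · exact hd.2.2.2.2 a hqA k hk
  -- K ∪ K' is a clique
  have hcl : G.IsClique (K ∪ K') := by
    intro x hx y hy hxy
    by_contra hnadj
    rcases hx with hx | hx <;> rcases hy with hy | hy
    · exact hnadj (hd.2.2.1 hx hy hxy)
    · exact strip_no_external_pair hS hd ⟨hxy, hnadj⟩
        (fun a ha => hd.2.2.2.2 a ha x hx) (fun a ha => hK'A y hy a ha)
    · exact strip_no_external_pair hS hd ⟨hxy, hnadj⟩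
        (fun a ha => hK'A x hx a ha) (fun a ha => hd.2.2.2.2 a ha y hy)
    · exact hnadj (hd'.2.2.1 hx hy hxy)
  have hT : IsStripPre G (A ∪ (K ∪ K')) := by
    refine ⟨A, K ∪ K', hd.1, ?_, hcl, rfl, ?_⟩
    · obtain ⟨k, hk⟩ := hd.2.1
      exact ⟨k, Or.inl hk⟩
    · intro a ha k hk
      rcases hk with hk | hk
      · exact hd.2.2.2.2 a ha k hk
      · exact hK'A k hk a ha
  have hST : S ⊆ A ∪ (K ∪ K') := by
    rw [← hd.2.2.2.1]
    exact Set.union_subset_union_right A Set.subset_union_left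
  have hS'T : S' ⊆ A ∪ (K ∪ K') := by
    rw [← hd'.2.2.2.1]
    refine Set.union_subset ?_ (Set.subset_union_of_subset_right Set.subset_union_right A)
    intro x hx
    rcases hA'c x hx with rfl | rfl
    · exact Or.inl hpA
    · exact Or.inl hqA
  rw [hS.2.2 _ hT hST, hS'.2.2 _ hT hS'T]

end Aux2
section Aux3
variable {V : Type*} {G : SimpleGraph V}

/-- Everything chain-connected to a wide hyperedge is wide. -/
lemma wide_chain [Finite V] {H M : Set V} (hH : IsWide G H)
    (h : ReflTransGen (hypStep G (Lam G 0)) H M) : IsWide G M := by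
  induction h with
  | refl => exact hH
  | tail _ hstep ih =>
    obtain ⟨hM, hM', s, t, hst, hs, ht⟩ := hstep
    rcases hM' with hM' | hM'
    · exact hM'
    · exact absurd (strip_wide_no_shared_pair hM' ih hst hs.2 ht.2 hs.1 ht.1)
        (fun f => f)

/-- Everything chain-connected to a strip hyperedge equals it. -/
lemma strip_chain [Finite V] {H M : Set V} (hH : IsStrip G H)
    (h : ReflTransGen (hypStep G (Lam G 0)) H M) : M = H := by
  induction h with
  | refl => rfl
  | tail _ hstep ih =>
    subst ih
    obtain ⟨hM, hM', s, t, hst, hs, ht⟩ := hstep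
    rcases hM' with hM' | hM'
    · exact absurd (strip_wide_no_shared_pair hH hM' hst hs.1 ht.1 hs.2 ht.2)
        (fun f => f)
    · exact (strip_eq_of_shared_pair hH hM' hst hs.1 ht.1 hs.2 ht.2).symm

lemma square_of_pairs {a a' b b' : V} (h1 : NonAdjPair G a a')
    (h2 : NonAdjPair G b b') (hab : G.Adj a b) (hab' : G.Adj a b')
    (ha'b : G.Adj a' b) (ha'b' : G.Adj a' b') :
    IsInducedSquare G {a, b, a', b'} :=
  ⟨a, b, a', b', rfl, hab, ha'b.symm, ha'b', hab'.symm, h1.1, h2.1, h1.2, h2.2⟩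

lemma rtg_sqAdj_of_shared {Q Q' : Set V} {p q : V} (hQ : IsInducedSquare G Q)
    (hQ' : IsInducedSquare G Q') (hpq : NonAdjPair G p q)
    (hpQ : p ∈ Q) (hpQ' : p ∈ Q') (hqQ : q ∈ Q) (hqQ' : q ∈ Q') :
    ReflTransGen (sqAdj G) Q Q' := by
  by_cases h : Q = Q'
  · exact h ▸ ReflTransGen.refl
  · exact ReflTransGen.single ⟨hQ, hQ', h, p, q, hpq, ⟨hpQ, hpQ'⟩, ⟨hqQ, hqQ'⟩⟩

/-- `v` lies in some square of the component of `Q₀`. -/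
def InOm (G : SimpleGraph V) (Q₀ : Set V) (v : V) : Prop :=
  ∃ Q, IsInducedSquare G Q ∧ ReflTransGen (sqAdj G) Q₀ Q ∧ v ∈ Q

/-- `{p, q}` is a nonadjacent pair lying in some square of the component of `Q₀`. -/
def GoodPair (G : SimpleGraph V) (Q₀ : Set V) (p q : V) : Prop :=
  NonAdjPair G p q ∧
    ∃ Q, IsInducedSquare G Q ∧ ReflTransGen (sqAdj G) Q₀ Q ∧ p ∈ Q ∧ q ∈ Q

lemma GoodPair.inOm_left {Q₀ : Set V} {p q : V} (h : GoodPair G Q₀ p q) :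
    InOm G Q₀ p := by
  obtain ⟨-, Q, hQ, hrtg, hp, -⟩ := h
  exact ⟨Q, hQ, hrtg, hp⟩

lemma GoodPair.symm {Q₀ : Set V} {p q : V} (h : GoodPair G Q₀ p q) :
    GoodPair G Q₀ q p := by
  obtain ⟨hpq, Q, hQ, hrtg, hp, hq⟩ := h
  exact ⟨nonAdjPair_symm hpq, Q, hQ, hrtg, hq, hp⟩

lemma goodPair_extend {Q₀ : Set V} {p q x y : V} (h : GoodPair G Q₀ p q)
    (hxy : NonAdjPair G x y) (hxp : G.Adj x p) (hxq : G.Adj x q)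
    (hyp : G.Adj y p) (hyq : G.Adj y q) : GoodPair G Q₀ x y := by
  obtain ⟨hpq, Q, hQ, hrtg, hp, hq⟩ := h
  have hQ' : IsInducedSquare G {x, p, y, q} :=
    square_of_pairs hxy hpq hxp hxq hyp hyq
  refine ⟨hxy, {x, p, y, q}, hQ', hrtg.trans (rtg_sqAdj_of_shared hQ hQ' hpq hp
    (Or.inr (Or.inl rfl)) hq (Or.inr (Or.inr (Or.inr rfl)))), Or.inl rfl,
    Or.inr (Or.inr (Or.inl rfl))⟩

/-- If one nonadjacent pair of a join is good, all nonadjacent pairs of the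
join are good. -/
lemma good_spread {Q₀ : Set V} {M A B : Set V} (jd : JoinDecomp G M A B)
    (hB : HasNonAdjPair G B) {p₀ q₀ : V} (hp₀ : p₀ ∈ A) (hq₀ : q₀ ∈ A)
    (hg : GoodPair G Q₀ p₀ q₀) :
    ∀ p q, p ∈ M → q ∈ M → NonAdjPair G p q → GoodPair G Q₀ p q := by
  obtain ⟨c, hc, c', hc', hcc⟩ := hB
  have hgB : GoodPair G Q₀ c c' :=
    goodPair_extend hg hcc (jd.2 p₀ hp₀ c hc).symm (jd.2 q₀ hq₀ c hc).symm
      (jd.2 p₀ hp₀ c' hc').symm (jd.2 q₀ hq₀ c' hc').symm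
  intro p q hpM hqM hpq
  rcases pair_same_side jd hpq hpM hqM with ⟨hpA, hqA⟩ | ⟨hpB, hqB⟩
  · exact goodPair_extend hgB hpq (jd.2 p hpA c hc) (jd.2 p hpA c' hc')
      (jd.2 q hqA c hc) (jd.2 q hqA c' hc')
  · exact goodPair_extend hg hpq (jd.2 p₀ hp₀ p hpB).symm
      (jd.2 q₀ hq₀ p hpB).symm (jd.2 p₀ hp₀ q hqB).symm (jd.2 q₀ hq₀ q hqB).symm

/-- The invariant along a chain starting at a wide hyperedge with a good base:
every member is wide and all its nonadjacent pairs are good. -/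
lemma invariant_chain [Finite V] {Q₀ H : Set V} (hH : IsWide G H)
    (hbase : ∀ p q, p ∈ H → q ∈ H → NonAdjPair G p q → GoodPair G Q₀ p q) :
    ∀ M, ReflTransGen (hypStep G (Lam G 0)) H M →
      (∀ p q, p ∈ M → q ∈ M → NonAdjPair G p q → GoodPair G Q₀ p q) := by
  intro M h
  induction h with
  | refl => exact hbase
  | @tail M M' hchain hstep ih =>
    obtain ⟨hM, hM', s, t, hst, hs, ht⟩ := hstep
    have hMwide : IsWide G M := wide_chain hH hchain
    have hM'wide : IsWide G M' := by
      rcases hM' with h' | h'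
      · exact h'
      · exact absurd (strip_wide_no_shared_pair h' hMwide hst hs.2 ht.2 hs.1 ht.1)
          (fun f => f)
    obtain ⟨A', B', jd, hA', hB'⟩ := hM'wide.1
    have hgood : GoodPair G Q₀ s t := ih s t hs.1 ht.1 hst
    rcases pair_same_side jd hst hs.2 ht.2 with ⟨hsA, htA⟩ | ⟨hsB, htB⟩
    · exact good_spread jd hB' hsA htA hgood
    · have jd' : JoinDecomp G M' B' A' :=
        ⟨by rw [Set.union_comm]; exact jd.1, fun b hb a ha => (jd.2 a ha b hb).symm⟩
      exact good_spread jd' hA' hsB htB hgood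

end Aux3
section Aux4
variable {V : Type*} {G : SimpleGraph V}

lemma hypStep_symm {E : Set (Set V)} : Symmetric (hypStep G E) := by
  rintro H H' ⟨h1, h2, s, t, hst, hs, ht⟩
  exact ⟨h2, h1, s, t, hst, ⟨hs.2, hs.1⟩, ⟨ht.2, ht.1⟩⟩

lemma cone_core {Q₀ M₂ A₂ B₂ : Set V} {p₀ q₀ v : V} (hv : ¬ InOm G Q₀ v)
    (jd : JoinDecomp G M₂ A₂ B₂) (hB₂ : HasNonAdjPair G B₂)
    (hInv : ∀ p q, p ∈ M₂ → q ∈ M₂ → NonAdjPair G p q → GoodPair G Q₀ p q)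
    (hp₀ : p₀ ∈ A₂) (hq₀ : q₀ ∈ A₂) (hg : GoodPair G Q₀ p₀ q₀)
    (hvp : G.Adj v p₀) (hvq : G.Adj v q₀) :
    ∀ z ∈ M₂, z ≠ v → G.Adj v z := by
  have stepB : ∀ z ∈ B₂, z ≠ v → G.Adj v z := by
    intro z hz hzv
    by_contra hn
    exact hv (goodPair_extend hg ⟨hzv.symm, hn⟩ hvp hvq
      (jd.2 p₀ hp₀ z hz).symm (jd.2 q₀ hq₀ z hz).symm).inOm_left
  obtain ⟨c, hc, c', hc', hcc⟩ := hB₂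
  have hcM : c ∈ M₂ := jd.1 ▸ (Or.inr hc)
  have hc'M : c' ∈ M₂ := jd.1 ▸ (Or.inr hc')
  have hgcc : GoodPair G Q₀ c c' := hInv c c' hcM hc'M hcc
  have hcv : c ≠ v := by rintro rfl; exact hv hgcc.inOm_left
  have hc'v : c' ≠ v := by rintro rfl; exact hv hgcc.symm.inOm_left
  have hvc : G.Adj v c := stepB c hc hcv
  have hvc' : G.Adj v c' := stepB c' hc' hc'v
  intro z hz hzv
  rw [← jd.1] at hz
  rcases hz with hz | hz
  · by_contra hn
    exact hv (goodPair_extend hgcc ⟨hzv.symm, hn⟩ hvc hvc'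
      (jd.2 z hz c hc) (jd.2 z hz c' hc')).inOm_left
  · exact stepB z hz hzv

lemma cone_chain [Finite V] {Q₀ H : Set V} (hH : IsWide G H)
    (hbase : ∀ p q, p ∈ H → q ∈ H → NonAdjPair G p q → GoodPair G Q₀ p q)
    {v : V} (hv : ¬ InOm G Q₀ v) {L : Set V}
    (hL : ReflTransGen (hypStep G (Lam G 0)) H L)
    (hCL : ∀ z ∈ L, z ≠ v → G.Adj v z) :
    ∀ M₂, ReflTransGen (hypStep G (Lam G 0)) L M₂ →
      ∀ z ∈ M₂, z ≠ v → G.Adj v z := by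
  intro M₂ h
  induction h with
  | refl => exact hCL
  | @tail M M₂ hchain hstep ih =>
    obtain ⟨hME, hM₂E, s, t, hst, hs, ht⟩ := hstep
    have hHM : ReflTransGen (hypStep G (Lam G 0)) H M := hL.trans hchain
    have hHM₂ : ReflTransGen (hypStep G (Lam G 0)) H M₂ :=
      hHM.tail ⟨hME, hM₂E, s, t, hst, hs, ht⟩
    have hInv₂ := invariant_chain hH hbase M₂ hHM₂
    have hgood : GoodPair G Q₀ s t :=
      invariant_chain hH hbase M hHM s t hs.1 ht.1 hst
    have hsv : s ≠ v := by rintro rfl; exact hv hgood.inOm_left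
    have htv : t ≠ v := by rintro rfl; exact hv hgood.symm.inOm_left
    have hvs : G.Adj v s := ih s hs.1 hsv
    have hvt : G.Adj v t := ih t ht.1 htv
    obtain ⟨A₂, B₂, jd, hA₂, hB₂⟩ := (wide_chain hH hHM₂).1
    rcases pair_same_side jd hst hs.2 ht.2 with ⟨hsA, htA⟩ | ⟨hsB, htB⟩
    · exact cone_core hv jd hB₂ hInv₂ hsA htA hgood hvs hvt
    · have jd' : JoinDecomp G M₂ B₂ A₂ :=
        ⟨by rw [Set.union_comm]; exact jd.1, fun b hb a ha => (jd.2 a ha b hb).symm⟩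
      exact cone_core hv jd' hA₂ hInv₂ hsB htB hgood hvs hvt

lemma adj_of_not_inOm [Finite V] {Q₀ H : Set V} (hH : IsWide G H)
    (hbase : ∀ p q, p ∈ H → q ∈ H → NonAdjPair G p q → GoodPair G Q₀ p q)
    (hcover : ∀ u : V, ∃ L, L ∈ Lam G 0 ∧
      ReflTransGen (hypStep G (Lam G 0)) H L ∧ u ∈ L)
    {v : V} (hv : ¬ InOm G Q₀ v) {w : V} (hw : w ≠ v) : G.Adj v w := by
  obtain ⟨L, hLE, hL, hvL⟩ := hcover v
  obtain ⟨L₂, hL₂E, hL₂, hwL₂⟩ := hcover w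
  have hCL : ∀ z ∈ L, z ≠ v → G.Adj v z := by
    intro z hz hzv
    by_contra hn
    exact hv ((invariant_chain hH hbase L hL) v z hvL hz ⟨fun h => hzv h.symm,
      hn⟩).inOm_left
  have hLL₂ : ReflTransGen (hypStep G (Lam G 0)) L L₂ :=
    (haveI : Std.Symm (hypStep G (Lam G 0)) := ⟨fun _ _ h => hypStep_symm h⟩;
      ReflTransGen.symmetric.symm _ _ hL).trans hL₂
  exact cone_chain hH hbase hv hL hCL L₂ hLL₂ w hwL₂ hw

end Aux4
section Main
variable {V : Type*}

lemma mem_lam0 {G : SimpleGraph V} {L : Set V} (h : IsWide G L ∨ IsStrip G L) :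
    L ∈ Lam G 0 := h

lemma lam1_elim {G : SimpleGraph V} {Z : Set V} (h : Z ∈ Lam G 1) :
    ∃ H ∈ Lam G 0,
      Z = ⋃₀ {H' | H' ∈ Lam G 0 ∧ ReflTransGen (hypStep G (Lam G 0)) H H'} := h

theorem hypergraph_index_one_iff_CFS' [Finite V] (G : SimpleGraph V) :
    HasHypIndex G 1 ↔
      IsCFS G ∧
      ¬ ∃ A B : Set V, A ∪ B = Set.univ ∧ (∀ a ∈ A, ∀ b ∈ B, G.Adj a b) ∧
          HasNonAdjPair G A ∧ HasNonAdjPair G B := by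
  constructor
  · rintro ⟨⟨Lw, hLw⟩, ⟨Z, hZ1, hZu⟩, hmin⟩
    have hnj : ¬ ∃ A B : Set V, A ∪ B = Set.univ ∧
        (∀ a ∈ A, ∀ b ∈ B, G.Adj a b) ∧ HasNonAdjPair G A ∧ HasNonAdjPair G B := by
      rintro ⟨A, B, hun, hadj, hA, hB⟩
      have hWpre : IsWidePre G (Set.univ : Set V) := ⟨A, B, ⟨hun, hadj⟩, hA, hB⟩
      obtain ⟨M, hsub, hM⟩ := exists_isWide_superset hWpre
      exact hmin 0 one_pos ⟨M, mem_lam0 (Or.inl hM), hsub⟩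
    refine ⟨?_, hnj⟩
    obtain ⟨H, hHE, rfl⟩ := lam1_elim hZ1
    rcases hHE with hHw | hHs
    · -- H is wide; build the CFS structure
      obtain ⟨AH, BH, jdH, ⟨a₀, ha₀, a₀', ha₀', hpa⟩, ⟨b₀, hb₀, b₀', hb₀', hpb⟩⟩ :=
        hHw.1
      set Q₀ : Set V := {a₀, b₀, a₀', b₀'} with hQ₀def
      have sq : IsInducedSquare G Q₀ :=
        square_of_pairs hpa hpb (jdH.2 a₀ ha₀ b₀ hb₀) (jdH.2 a₀ ha₀ b₀' hb₀')
          (jdH.2 a₀' ha₀' b₀ hb₀) (jdH.2 a₀' ha₀' b₀' hb₀')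
      have hgood0 : GoodPair G Q₀ a₀ a₀' :=
        ⟨hpa, Q₀, sq, ReflTransGen.refl, Or.inl rfl, Or.inr (Or.inr (Or.inl rfl))⟩
      have hbase : ∀ p q, p ∈ H → q ∈ H → NonAdjPair G p q → GoodPair G Q₀ p q :=
        good_spread jdH ⟨b₀, hb₀, b₀', hb₀', hpb⟩ ha₀ ha₀' hgood0
      have hcover : ∀ u : V, ∃ L, L ∈ Lam G 0 ∧
          ReflTransGen (hypStep G (Lam G 0)) H L ∧ u ∈ L := by
        intro u
        obtain ⟨L, ⟨hLE, hLrtg⟩, hu⟩ := hZu (Set.mem_univ u)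
        exact ⟨L, hLE, hLrtg, hu⟩
      refine ⟨{v | InOm G Q₀ v}, {v | ¬ InOm G Q₀ v}, ?_, ?_, ?_, Q₀, sq, ?_⟩
      · ext v; simp [em]
      · intro x hx y hy hne
        exact adj_of_not_inOm hHw hbase hcover hx hne.symm
      · intro o ho k hk
        have : o ≠ k := by rintro rfl; exact hk ho
        exact (adj_of_not_inOm hHw hbase hcover hk this).symm
      · ext v
        simp only [Set.mem_sUnion, Set.mem_setOf_eq, InOm]
        constructor
        · rintro ⟨Q, ⟨h1, h2⟩, h3⟩; exact ⟨Q, h1, h2, h3⟩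
        · rintro ⟨Q, h1, h2, h3⟩; exact ⟨Q, ⟨h1, h2⟩, h3⟩
    · -- H is a strip: contradiction with minimality at level 0
      exfalso
      have hZH : (⋃₀ {H' | H' ∈ Lam G 0 ∧
          ReflTransGen (hypStep G (Lam G 0)) H H'}) ⊆ H := by
        refine Set.sUnion_subset ?_
        intro H' hH'
        rw [strip_chain hHs hH'.2]
      exact hmin 0 one_pos ⟨H, mem_lam0 (Or.inr hHs), hZu.trans hZH⟩
  · rintro ⟨⟨Om, K, hun, hKcl, hjoin, Q₀, hQ₀, hsupp⟩, hnj⟩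
    have hOm : ∀ x ∈ Q₀, x ∈ Om → True := fun _ _ _ => trivial
    -- every square in the component gives a wide-pre subgraph together with K
    have wpre : ∀ Q, IsInducedSquare G Q → ReflTransGen (sqAdj G) Q₀ Q →
        IsWidePre G (Q ∪ K) := by
      intro Q hQsq hrtg
      have hmem : ∀ x ∈ Q, x ∈ Om := by
        intro x hx
        rw [← hsupp]
        exact ⟨Q, ⟨hQsq, hrtg⟩, hx⟩
      obtain ⟨a, b, c, d, rfl, hab, hbc, hcd, hda, hac_ne, hbd_ne, hac, hbd⟩ := hQsq
      refine ⟨{a, c}, {b, d} ∪ K, ⟨?_, ?_⟩,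
        ⟨a, Or.inl rfl, c, Or.inr rfl, hac_ne, hac⟩,
        ⟨b, Or.inl (Or.inl rfl), d, Or.inl (Or.inr rfl), hbd_ne, hbd⟩⟩
      · ext x
        simp only [Set.mem_union, Set.mem_insert_iff, Set.mem_singleton_iff]
        tauto
      · rintro x (rfl | rfl) y hy
        · rcases hy with (rfl | rfl) | hy
          · exact hab
          · exact hda.symm
          · exact hjoin x (hmem x (Or.inl rfl)) y hy
        · rcases hy with (rfl | rfl) | hy
          · exact hbc.symm
          · exact hcd
          · exact hjoin x (hmem x (Or.inr (Or.inr (Or.inl rfl)))) y hy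
    obtain ⟨H, hHsub, hHw⟩ :=
      exists_isWide_superset (wpre Q₀ hQ₀ ReflTransGen.refl)
    -- every square of the component sits in a wide hyperedge chain-connected to H
    have chainlem : ∀ Q, ReflTransGen (sqAdj G) Q₀ Q →
        ∃ L, IsWide G L ∧ Q ∪ K ⊆ L ∧
          ReflTransGen (hypStep G (Lam G 0)) H L := by
      intro Q h
      induction h with
      | refl => exact ⟨H, hHw, hHsub, ReflTransGen.refl⟩
      | @tail Q Q' hchain hstep ih =>
        obtain ⟨L, hLw, hLsub, hLrtg⟩ := ih
        obtain ⟨hQsq, hQ'sq, hne, s, t, hst, hs, ht⟩ := hstep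
        obtain ⟨L', hL'sub, hL'w⟩ := exists_isWide_superset
          (wpre Q' hQ'sq (hchain.tail ⟨hQsq, hQ'sq, hne, s, t, hst, hs, ht⟩))
        refine ⟨L', hL'w, hL'sub, hLrtg.tail ?_⟩
        exact ⟨mem_lam0 (Or.inl hLw), mem_lam0 (Or.inl hL'w), s, t, hst,
          ⟨hLsub (Or.inl hs.1), hL'sub (Or.inl hs.2)⟩,
          ⟨hLsub (Or.inl ht.1), hL'sub (Or.inl ht.2)⟩⟩
    refine ⟨⟨H, hHw⟩, ⟨⋃₀ {H' | H' ∈ Lam G 0 ∧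
      ReflTransGen (hypStep G (Lam G 0)) H H'}, ⟨H, mem_lam0 (Or.inl hHw), rfl⟩,
      ?_⟩, ?_⟩
    · intro v _
      have hv : v ∈ Om ∪ K := by rw [hun]; exact Set.mem_univ v
      rcases hv with hv | hv
      · rw [← hsupp] at hv
        obtain ⟨Q, ⟨hQsq, hrtg⟩, hvQ⟩ := hv
        obtain ⟨L, hLw, hLsub, hLrtg⟩ := chainlem Q hrtg
        exact ⟨L, ⟨mem_lam0 (Or.inl hLw), hLrtg⟩, hLsub (Or.inl hvQ)⟩
      · exact ⟨H, ⟨mem_lam0 (Or.inl hHw), ReflTransGen.refl⟩,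
          hHsub (Or.inr hv)⟩
    · intro h' hh'
      interval_cases h'
      rintro ⟨H₀, hH₀, hsub⟩
      have hH₀eq : H₀ = Set.univ := Set.eq_univ_of_univ_subset hsub
      subst hH₀eq
      rcases hH₀ with hw | hs
      · obtain ⟨A, B, jd, hA, hB⟩ := hw.1
        exact hnj ⟨A, B, jd.1, jd.2, hA, hB⟩
      · obtain ⟨A, K', hd⟩ := hs.1
        obtain ⟨a, b, c, d, rfl, hab, hbc, hcd, hda, hac_ne, hbd_ne, hac, hbd⟩ := hQ₀
        have hbA : b ∈ A := (strip_pair_mem hd ⟨hbd_ne, hbd⟩ trivial trivial).1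
        rcases strip_pair_eq hd ⟨hac_ne, hac⟩ trivial trivial b hbA with rfl | rfl
        · exact G.irrefl hab
        · exact G.irrefl hbc

end Main

/-- `Γ` has hypergraph index `1` iff `Γ` is CFS and `Γ` is not a
join `A ⋆ B` with `A` and `B` each containing a pair of non-adjacent vertices. -/
theorem hypergraph_index_one_iff_CFS [Finite V] (G : SimpleGraph V) :
    HasHypIndex G 1 ↔
      IsCFS G ∧
      ¬ ∃ A B : Set V, A ∪ B = Set.univ ∧ (∀ a ∈ A, ∀ b ∈ B, G.Adj a b) ∧
          HasNonAdjPair G A ∧ HasNonAdjPair G B := by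
  exact hypergraph_index_one_iff_CFS' G
end
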